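/- With M of type 1', r = ⌊a2/a1⌋ + 1, and γ = max{0, r c2 - c1}: D_{r+1} is a well-defined polynomial and D_{r+1} ≡ - z^{(r+1)c1 + r c2 + γ} (mod x). -/

import Mathlib

open MvPolynomial

private lemma calc_aux_stmt14 {R : Type*} [CommRing R] (x y z hd E S : R)
    (p q a12 n c2' mj cc d s1 s2 s3 : ℕ)
    (hpq : p + a12 = q + n)
    (h1 : c2' = d + s1) (h2 : mj = d + s2) (h3 : cc = d + s3) :
    x ^ p * ((x ^ a12 - z ^ c2' * y) * (hd + z ^ mj * E)) - x ^ q * (hd * x ^ n + z ^ cc * S)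
      = z ^ d * (-(z ^ s1 * (y * (x ^ p * hd))) + x ^ p * x ^ a12 * (z ^ s2 * E)
          - x ^ p * (z ^ (s1 + (d + s2)) * (y * E)) - x ^ q * (z ^ s3 * S)) := by
  subst h1 h2 h3
  have h : x ^ (p + a12) = x ^ (q + n) := by rw [hpq]
  linear_combination hd * h

theorem stmt_14 {k : Type*} [Field k]
    (a1 a2 b c1 c2 r γ : ℕ)
    (ha1 : 0 < a1) (hb : 0 < b) (hc2 : 0 < c2)
    (ha : a1 ≤ a2) (hc : c2 ≤ c1)
    (hslope : a2 * c2 ≤ a1 * c1)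
    (hr : r = a2 / a1 + 1)
    (hγ : γ = r * c2 - c1)
    (x y z F G H : MvPolynomial (Fin 3) k)
    (hx : x = X 0) (hy : y = X 1) (hz : z = X 2)
    (hF : F = y ^ (2 * b) - x ^ a2 * z ^ c1)
    (hG : G = z ^ (c1 + c2) - y ^ b * x ^ a1)
    (hH : H = x ^ (a1 + a2) - z ^ c2 * y ^ b) :
    ∃ D : ℕ → MvPolynomial (Fin 3) k,
      D 0 = -(y ^ b) ∧
      (∀ l, 1 ≤ l → l ≤ r + 1 →
        z ^ (c2 - ((l - 1) * c2 - c1)) * D l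
          = x ^ ((l - 1) * a1 - a2) * (H * D (l - 1))
            - x ^ ((((l - 1) * a1 - a2) + a2) - (l - 1) * a1) * G ^ l) ∧
      D (r + 1) + z ^ ((r + 1) * c1 + r * c2 + γ) ∈ Ideal.span {x} := by
  classical
  obtain ⟨r', hr'⟩ : ∃ r', r = r' + 1 := ⟨a2 / a1, hr⟩
  have hr'' : r' = a2 / a1 := by omega
  -- basic arithmetic facts
  have hra1 : r' * a1 ≤ a2 := by rw [hr'']; exact Nat.div_mul_le_self a2 a1
  have hra2 : a2 < r * a1 := by
    rw [hr, add_mul, one_mul]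
    exact Nat.lt_div_mul_add ha1
  have hrc : r' * c2 ≤ c1 := by
    have h1 : a2 / a1 * a1 * c2 ≤ a2 * c2 :=
      Nat.mul_le_mul_right c2 (Nat.div_mul_le_self a2 a1)
    have h2 : a1 * (a2 / a1 * c2) ≤ a1 * c1 := by
      calc a1 * (a2 / a1 * c2) = a2 / a1 * a1 * c2 := by ring
      _ ≤ a2 * c2 := h1
      _ ≤ a1 * c1 := hslope
    rw [hr'']
    exact Nat.le_of_mul_le_mul_left h2 ha1
  have hγc2 : γ ≤ c2 := by
    have h1 : r * c2 = r' * c2 + c2 := by rw [hr']; ring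
    rw [hγ, h1]
    omega
  -- nonzeroness
  have hzne : z ≠ 0 := by rw [hz]; exact MvPolynomial.X_ne_zero 2
  -- decomposition of powers of G
  have hGd : ∀ n : ℕ, ∃ S, G ^ n = (-1) ^ n * y ^ (n * b) * x ^ (n * a1) + z ^ (c1 + c2) * S := by
    intro n
    have h2 : G - -(y ^ b * x ^ a1) ∣ G ^ n - (-(y ^ b * x ^ a1)) ^ n :=
      sub_dvd_pow_sub_pow _ _ n
    have h1 : G - -(y ^ b * x ^ a1) = z ^ (c1 + c2) := by rw [hG]; ring
    rw [h1] at h2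
    obtain ⟨S, hS⟩ := h2
    refine ⟨S, ?_⟩
    have h3 : (-(y ^ b * x ^ a1)) ^ n = (-1) ^ n * y ^ (n * b) * x ^ (n * a1) := by
      rw [mul_comm n b, mul_comm n a1, pow_mul, pow_mul, neg_pow, mul_pow]
      ring
    linear_combination hS + h3
  -- define D by recursion with choice
  set D : ℕ → MvPolynomial (Fin 3) k := fun n =>
    Nat.rec (-(y ^ b))
      (fun j p =>
        if h : ∃ c : MvPolynomial (Fin 3) k,
            x ^ (j * a1 - a2) * (H * p)
              - x ^ (((j * a1 - a2) + a2) - j * a1) * G ^ (j + 1)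
              = z ^ (c2 - (j * c2 - c1)) * c
        then h.choose else 0) n with hDdef
  have hD0 : D 0 = -(y ^ b) := rfl
  have hstep : ∀ j : ℕ, D (j + 1) =
      if h : ∃ c : MvPolynomial (Fin 3) k,
          x ^ (j * a1 - a2) * (H * D j)
            - x ^ (((j * a1 - a2) + a2) - j * a1) * G ^ (j + 1)
            = z ^ (c2 - (j * c2 - c1)) * c
      then h.choose else 0 := by
    intro j
    rw [hDdef]
  have hdvd_eq : ∀ j : ℕ,
      (h : ∃ c : MvPolynomial (Fin 3) k,
          x ^ (j * a1 - a2) * (H * D j)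
            - x ^ (((j * a1 - a2) + a2) - j * a1) * G ^ (j + 1)
            = z ^ (c2 - (j * c2 - c1)) * c) →
      z ^ (c2 - (j * c2 - c1)) * D (j + 1)
        = x ^ (j * a1 - a2) * (H * D j)
          - x ^ (((j * a1 - a2) + a2) - j * a1) * G ^ (j + 1) := by
    intro j h
    rw [hstep j, dif_pos h]
    exact h.choose_spec.symm
  -- the main computational step
  have hmain : ∀ (j : ℕ) (E : MvPolynomial (Fin 3) k),
      D j = (-1) ^ (j + 1) * y ^ ((j + 1) * b) + z ^ (c1 + c2 - j * c2) * E →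
      (∃ c : MvPolynomial (Fin 3) k,
          x ^ (j * a1 - a2) * (H * D j)
            - x ^ (((j * a1 - a2) + a2) - j * a1) * G ^ (j + 1)
            = z ^ (c2 - (j * c2 - c1)) * c) ∧
      (j + 1 ≤ r → ∃ E' : MvPolynomial (Fin 3) k,
          D (j + 1) = (-1) ^ (j + 1 + 1) * y ^ ((j + 1 + 1) * b)
            + z ^ (c1 + c2 - (j + 1) * c2) * E') := by
    intro j E hE
    obtain ⟨S, hS⟩ := hGd (j + 1)
    have hpq : (j * a1 - a2) + (a1 + a2) = (((j * a1 - a2) + a2) - j * a1) + (j + 1) * a1 := by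
      have h : (j + 1) * a1 = j * a1 + a1 := by ring
      rw [h]
      have h' : ∀ A : ℕ, (A - a2) + (a1 + a2) = (((A - a2) + a2) - A) + (A + a1) := by
        intro A; omega
      exact h' (j * a1)
    have h1 : c2 = (c2 - (j * c2 - c1)) + (c2 - (c2 - (j * c2 - c1))) := by
      have h' : ∀ A : ℕ, c2 = (c2 - (A - c1)) + (c2 - (c2 - (A - c1))) := by intro A; omega
      exact h' (j * c2)
    have h2 : c1 + c2 - j * c2
        = (c2 - (j * c2 - c1)) + ((c1 + c2 - j * c2) - (c2 - (j * c2 - c1))) := by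
      have h' : ∀ A : ℕ, c1 + c2 - A = (c2 - (A - c1)) + ((c1 + c2 - A) - (c2 - (A - c1))) := by
        intro A; omega
      exact h' (j * c2)
    have h3 : c1 + c2 = (c2 - (j * c2 - c1)) + ((c1 + c2) - (c2 - (j * c2 - c1))) := by
      have h' : ∀ A : ℕ, c1 + c2 = (c2 - (A - c1)) + ((c1 + c2) - (c2 - (A - c1))) := by
        intro A; omega
      exact h' (j * c2)
    have hT : x ^ (j * a1 - a2) * (H * D j)
        - x ^ (((j * a1 - a2) + a2) - j * a1) * G ^ (j + 1)
        = z ^ (c2 - (j * c2 - c1)) *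
          (-(z ^ (c2 - (c2 - (j * c2 - c1))) *
              (y ^ b * (x ^ (j * a1 - a2) * ((-1) ^ (j + 1) * y ^ ((j + 1) * b)))))
            + x ^ (j * a1 - a2) * x ^ (a1 + a2)
              * (z ^ ((c1 + c2 - j * c2) - (c2 - (j * c2 - c1))) * E)
            - x ^ (j * a1 - a2) *
              (z ^ ((c2 - (c2 - (j * c2 - c1)))
                  + ((c2 - (j * c2 - c1)) + ((c1 + c2 - j * c2) - (c2 - (j * c2 - c1)))))
                * (y ^ b * E))
            - x ^ (((j * a1 - a2) + a2) - j * a1)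
              * (z ^ ((c1 + c2) - (c2 - (j * c2 - c1))) * S)) := by
      rw [hE, hH, hS]
      exact calc_aux_stmt14 x (y ^ b) z ((-1) ^ (j + 1) * y ^ ((j + 1) * b)) E S
        (j * a1 - a2) (((j * a1 - a2) + a2) - j * a1) (a1 + a2) ((j + 1) * a1)
        c2 (c1 + c2 - j * c2) (c1 + c2)
        (c2 - (j * c2 - c1)) (c2 - (c2 - (j * c2 - c1)))
        ((c1 + c2 - j * c2) - (c2 - (j * c2 - c1))) ((c1 + c2) - (c2 - (j * c2 - c1)))
        hpq h1 h2 h3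
    refine ⟨⟨_, hT⟩, ?_⟩
    intro hj1
    have hjr' : j ≤ r' := by omega
    have hjc1 : j * c2 ≤ c1 := le_trans (Nat.mul_le_mul_right c2 hjr') hrc
    have hja2 : j * a1 ≤ a2 := le_trans (Nat.mul_le_mul_right a1 hjr') hra1
    have heq := hdvd_eq j ⟨_, hT⟩
    have hDj1 := mul_left_cancel₀ (pow_ne_zero _ hzne) (heq.trans hT)
    have e1 : j * c2 - c1 = 0 := Nat.sub_eq_zero_of_le hjc1
    have e2 : j * a1 - a2 = 0 := Nat.sub_eq_zero_of_le hja2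
    rw [e1, e2, Nat.sub_zero, Nat.sub_self] at hDj1
    refine ⟨x ^ (a1 + a2) * E - z ^ c2 * (y ^ b * E)
      - x ^ ((0 + a2) - j * a1) * (z ^ (j * c2) * S), ?_⟩
    rw [hDj1]
    have f1 : (c1 + c2 - j * c2) - c2 = c1 - j * c2 := by
      have h' : ∀ A : ℕ, (c1 + c2 - A) - c2 = c1 - A := by intro A; omega
      exact h' (j * c2)
    have f2 : c1 + c2 - (j + 1) * c2 = c1 - j * c2 := by
      have h : (j + 1) * c2 = j * c2 + c2 := by ring
      rw [h]
      have h' : ∀ A : ℕ, c1 + c2 - (A + c2) = c1 - A := by intro A; omega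
      exact h' (j * c2)
    have f3 : 0 + (c2 + (c1 - j * c2)) = (c1 - j * c2) + c2 := by
      have h' : ∀ A : ℕ, 0 + (c2 + A) = A + c2 := by intro A; omega
      exact h' (c1 - j * c2)
    have f4 : (c1 + c2) - c2 = (c1 - j * c2) + j * c2 := by
      have h' : ∀ A : ℕ, A ≤ c1 → (c1 + c2) - c2 = (c1 - A) + A := by intro A hA; omega
      exact h' (j * c2) hjc1
    rw [f1, f2, f3, f4]
    ring
  -- the invariant by induction
  have hinv : ∀ j : ℕ, j ≤ r → ∃ E : MvPolynomial (Fin 3) k,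
      D j = (-1) ^ (j + 1) * y ^ ((j + 1) * b) + z ^ (c1 + c2 - j * c2) * E := by
    intro j
    induction j with
    | zero =>
      intro _
      refine ⟨0, ?_⟩
      rw [hD0]
      simp
    | succ j ih =>
      intro hj
      obtain ⟨E, hE⟩ := ih (by omega)
      exact (hmain j E hE).2 hj
  refine ⟨D, hD0, ?_, ?_⟩
  · -- the recurrence equations
    intro l hl1 hl2
    obtain ⟨j, rfl⟩ : ∃ j, l = j + 1 := ⟨l - 1, by omega⟩
    simp only [Nat.add_sub_cancel]
    obtain ⟨E, hE⟩ := hinv j (by omega)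
    exact hdvd_eq j (hmain j E hE).1
  · -- the final congruence mod x
    obtain ⟨E, hE⟩ := hinv r le_rfl
    have heq := hdvd_eq r (hmain r E hE).1
    rw [← hγ] at heq
    have hq0 : ((r * a1 - a2) + a2) - r * a1 = 0 := by
      have h' : ∀ A : ℕ, a2 ≤ A → ((A - a2) + a2) - A = 0 := by intro A hA; omega
      exact h' (r * a1) (le_of_lt hra2)
    have hcalc : (c2 - γ) + ((r + 1) * c1 + r * c2 + γ) = (c1 + c2) * (r + 1) := by
      rw [show (c1 + c2) * (r + 1) = (r + 1) * c1 + (r * c2 + c2) from by ring]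
      have h' : ∀ A B u v : ℕ, v ≤ u → (u - v) + (A + B + v) = A + (B + u) := by
        intro A B u v h; omega
      exact h' ((r + 1) * c1) (r * c2) c2 γ hγc2
    -- primeness of (x)
    have hprime : Prime x := by
      rw [hx]
      have hP : Prime ((MvPolynomial.finSuccEquiv k 2) (X 0)) := by
        rw [MvPolynomial.finSuccEquiv_X_zero]
        exact Polynomial.prime_X
      exact (MulEquiv.prime_iff (MvPolynomial.finSuccEquiv k 2)).mp hP
    have hspanp : (Ideal.span {x}).IsPrime :=
      (Ideal.span_singleton_prime hprime.ne_zero).mpr hprime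
    have hxmem : x ∈ Ideal.span {x} := Ideal.mem_span_singleton_self x
    have hmem : z ^ (c2 - γ) * (D (r + 1) + z ^ ((r + 1) * c1 + r * c2 + γ))
        ∈ Ideal.span {x} := by
      have hE2 : z ^ (c2 - γ) * (D (r + 1) + z ^ ((r + 1) * c1 + r * c2 + γ))
          = x ^ (r * a1 - a2) * (H * D r) + ((z ^ (c1 + c2)) ^ (r + 1) - G ^ (r + 1)) := by
        calc z ^ (c2 - γ) * (D (r + 1) + z ^ ((r + 1) * c1 + r * c2 + γ))
            = z ^ (c2 - γ) * D (r + 1) + z ^ ((c2 - γ) + ((r + 1) * c1 + r * c2 + γ)) := by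
              rw [mul_add, ← pow_add]
          _ = (x ^ (r * a1 - a2) * (H * D r)
                - x ^ (((r * a1 - a2) + a2) - r * a1) * G ^ (r + 1))
                + z ^ ((c1 + c2) * (r + 1)) := by rw [heq, hcalc]
          _ = x ^ (r * a1 - a2) * (H * D r) + ((z ^ (c1 + c2)) ^ (r + 1) - G ^ (r + 1)) := by
              rw [hq0, pow_zero, one_mul, ← pow_mul]
              ring
      rw [hE2]
      refine Ideal.add_mem _ (Ideal.mul_mem_right _ _ ?_) ?_
      · exact Ideal.pow_mem_of_mem _ hxmem _ (by omega)
      · obtain ⟨c, hcdvd⟩ := sub_dvd_pow_sub_pow (z ^ (c1 + c2)) G (r + 1)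
        have h2 : z ^ (c1 + c2) - G = y ^ b * x ^ a1 := by rw [hG]; ring
        rw [h2] at hcdvd
        rw [hcdvd]
        exact Ideal.mul_mem_right _ _
          (Ideal.mul_mem_left _ _ (Ideal.pow_mem_of_mem _ hxmem _ ha1))
    rcases hspanp.mem_or_mem hmem with h | h
    · exfalso
      rw [Ideal.mem_span_singleton] at h
      have hmap := map_dvd (eval (fun i : Fin 3 => if i = 2 then (1 : k) else 0)) h
      rw [hx, eval_X, map_pow, hz, eval_X] at hmap
      rw [if_neg (by decide : ¬ ((0 : Fin 3) = 2)), if_pos rfl, one_pow] at hmap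
      exact one_ne_zero (zero_dvd_iff.mp hmap)
    · exact h
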